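/- (Identifiability criterion for C = 2.) Multiplying the four nonnegativity inequalities pairwise yields the constraint (μ^(2)_x − w_2)(μ^(2)_y − w_2)/(w_1 w_2) ≤ w'_1/w'_2 ≤ w_1 w_2 / ((μ^(1)_x − w_1)(μ^(1)_y − w_1)), and the lower and upper bounds both equal w_1/w_2 if and only if μ^(1)_x = μ^(2)_x = μ^(1)_y = μ^(2)_y = 1. Hence the two-component bivariate CIMM instance is identifiable up to permutation if and only if all four essential suprema μ^(i)_t equal 1. -/

import Mathlib

open MeasureTheory

section S19Aux

open Filter


section Helpers

variable {X Y : Type*} [MeasurableSpace X] [MeasurableSpace Y]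

lemma s19_ae_fst (μ : Measure X) (ν : Measure Y) [SigmaFinite μ] [SigmaFinite ν]
    {P : X → Prop} (h : ∀ᵐ x ∂μ, P x) : ∀ᵐ p ∂(μ.prod ν), P p.1 := by
  rw [ae_iff] at h ⊢
  refine measure_mono_null (t := (toMeasurable μ {x | ¬ P x}) ×ˢ Set.univ)
    (fun p hp => Set.mem_prod.mpr ⟨subset_toMeasurable μ {x | ¬ P x} hp, Set.mem_univ _⟩) ?_
  rw [Measure.prod_prod, measure_toMeasurable, h, zero_mul]

lemma s19_ae_snd (μ : Measure X) (ν : Measure Y) [SigmaFinite μ] [SigmaFinite ν]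
    {P : Y → Prop} (h : ∀ᵐ y ∂ν, P y) : ∀ᵐ p ∂(μ.prod ν), P p.2 := by
  rw [ae_iff] at h ⊢
  refine measure_mono_null (t := Set.univ ×ˢ (toMeasurable ν {y | ¬ P y}))
    (fun p hp => Set.mem_prod.mpr ⟨Set.mem_univ _, subset_toMeasurable ν {y | ¬ P y} hp⟩) ?_
  rw [Measure.prod_prod, measure_toMeasurable, h, mul_zero]

lemma s19_ae_swap (μ : Measure X) (ν : Measure Y) [SigmaFinite μ] [SigmaFinite ν]
    {P : Y × X → Prop} (h : ∀ᵐ p ∂(ν.prod μ), P p) : ∀ᵐ p ∂(μ.prod ν), P p.swap :=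
  (Measure.measurePreserving_swap (μ := μ) (ν := ν)).quasiMeasurePreserving.ae h

/-- pure arithmetic extraction lemma for the coefficient inequalities -/
lemma s19_arith (w1 w2 α β : ℝ) (hw1 : 0 < w1) (hw2 : 0 < w2)
    (h : ∀ ε : ℝ, 0 < ε → ∃ F1v F2v : ℝ, 0 ≤ F1v ∧ 0 ≤ F2v ∧
      0 < w1 * F1v + w2 * F2v ∧ (1 - ε) * (w1 * F1v + w2 * F2v) < w1 * F1v ∧
      0 ≤ α * F1v + β * F2v) : 0 ≤ α := by
  by_contra hα
  push_neg at hα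
  set ε := -α * w2 / (-α * w2 + |β| * w1 + w1 * w2) with hε
  have hden : 0 < -α * w2 + |β| * w1 + w1 * w2 := by
    have := abs_nonneg β; nlinarith
  have hεpos : 0 < ε := by
    apply div_pos (by nlinarith) hden
  obtain ⟨F1v, F2v, h1, h2, h3, h4, h5⟩ := h ε hεpos
  set s := w1 * F1v + w2 * F2v with hs
  have hF2 : w2 * F2v < ε * s := by nlinarith
  have habs : β ≤ |β| := le_abs_self β
  have h0abs : 0 ≤ |β| := abs_nonneg β
  have hεeq : ε * (-α * w2 + |β| * w1 + w1 * w2) = -α * w2 := by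
    rw [hε]; exact div_mul_cancel₀ _ (ne_of_gt hden)
  have p1 : w1 * (α * F1v) ≤ α * ((1 - ε) * s) := by nlinarith
  have p2 : w2 * (β * F2v) ≤ |β| * (ε * s) := by
    nlinarith [mul_le_mul_of_nonneg_right habs h2,
      mul_le_mul_of_nonneg_left (le_of_lt hF2) h0abs]
  have m0 : 0 ≤ w1 * w2 * (α * F1v + β * F2v) :=
    mul_nonneg (le_of_lt (mul_pos hw1 hw2)) h5
  have m1 := mul_le_mul_of_nonneg_left p1 (le_of_lt hw2)
  have m2 := mul_le_mul_of_nonneg_left p2 (le_of_lt hw1)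
  have hεs : ε * (-α * w2 + |β| * w1 + w1 * w2) * s = -α * w2 * s := by rw [hεeq]
  have hεws : 0 < ε * (w1 * w2 * s) := by positivity
  nlinarith [m0, m1, m2, hεs, hεws]

/-- positivity of a coefficient from nonnegativity of an a.e.-representation plus
essSup-slack witnesses. -/
lemma s19_coeff_nonneg (μ : Measure X) (w1 w2 α β : ℝ)
    (hw1 : 0 < w1) (hw2 : 0 < w2) (F1 F2 : X → ℝ)
    (h1 : ∀ x, 0 ≤ F1 x) (h2 : ∀ x, 0 ≤ F2 x)
    (hstar : ∀ ε : ℝ, 0 < ε → ¬ (∀ᵐ x ∂μ, ¬ (0 < w1 * F1 x + w2 * F2 x ∧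
      (1 - ε) * (w1 * F1 x + w2 * F2 x) < w1 * F1 x)))
    (hrep : ∀ᵐ x ∂μ, 0 ≤ α * F1 x + β * F2 x) : 0 ≤ α := by
  refine s19_arith w1 w2 α β hw1 hw2 (fun ε hε => ?_)
  by_contra hno
  push_neg at hno
  refine hstar ε hε ?_
  filter_upwards [hrep] with x hx
  intro hc
  have := hno (F1 x) (F2 x) (h1 x) (h2 x) hc.1 hc.2
  linarith

end Helpers

lemma s19_final (w1 w2 w1' w2' lam lam' : ℝ) (hw1 : 0 < w1) (hw2 : 0 < w2)
    (hw : w1 + w2 = 1) (hw1' : 0 < w1') (hw2' : 0 < w2') (hsum' : w1' + w2' = 1)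
    (hmul : w1' * w2' * (lam * lam') = w1 * w2)
    (b1 : w1' * lam ≤ w1) (b2 : w2' * lam ≤ w2)
    (b3 : -w1 ≤ w2' * lam) (b4 : -w2 ≤ w1' * lam)
    (c1 : w1' * lam' ≤ w1) (c2 : w2' * lam' ≤ w2)
    (c3 : -w1 ≤ w2' * lam') (c4 : -w2 ≤ w1' * lam') :
    (w1' = w1 ∧ w2' = w2 ∧ lam = 1 ∧ lam' = 1) ∨
      (w1' = w2 ∧ w2' = w1 ∧ lam = -1 ∧ lam' = -1) := by
  have hww : 0 < w1 * w2 := mul_pos hw1 hw2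
  have hww' : 0 < w1' * w2' := mul_pos hw1' hw2'
  have hll : 0 < lam * lam' := by nlinarith
  rcases lt_trichotomy lam 0 with hl | hl | hl
  · -- lam < 0, lam' < 0 : swap case
    right
    have hl' : lam' < 0 := by nlinarith
    have hA : w1' * (-lam) ≤ w2 := by linarith
    have hB : w2' * (-lam') ≤ w1 := by linarith
    have hC : w2' * (-lam) ≤ w1 := by linarith
    have hD : w1' * (-lam') ≤ w2 := by linarith
    have hApos : 0 < w1' * (-lam) := mul_pos hw1' (by linarith)
    have hBpos : 0 < w2' * (-lam') := mul_pos hw2' (by linarith)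
    have hCpos : 0 < w2' * (-lam) := mul_pos hw2' (by linarith)
    have hDpos : 0 < w1' * (-lam') := mul_pos hw1' (by linarith)
    have hAB : (w1' * (-lam)) * (w2' * (-lam')) = w2 * w1 := by linear_combination hmul
    have hCD : (w2' * (-lam)) * (w1' * (-lam')) = w1 * w2 := by linear_combination hmul
    have hBge : w1 ≤ w2' * (-lam') := by
      nlinarith [mul_nonneg (sub_nonneg.mpr hA) (le_of_lt hBpos)]
    have hBeq : w2' * (-lam') = w1 := le_antisymm hB hBge
    have hAeq : w1' * (-lam) = w2 := by
      have h2 : (w1' * (-lam)) * w1 = w2 * w1 := by linear_combination hAB - (w1' * -lam) * hBeq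
      exact mul_right_cancel₀ (ne_of_gt hw1) h2
    have hCge : w1 ≤ w2' * (-lam) := by
      nlinarith [mul_nonneg (sub_nonneg.mpr hD) (le_of_lt hCpos)]
    have hCeq : w2' * (-lam) = w1 := le_antisymm hC hCge
    have hDeq : w1' * (-lam') = w2 := by
      have h2 : (w1' * (-lam')) * w1 = w2 * w1 := by linear_combination hCD - (w1' * -lam') * hCeq
      exact mul_right_cancel₀ (ne_of_gt hw1) h2
    have hlam : lam = -1 := by
      linear_combination -hAeq - hCeq - lam * hsum' - hw
    have hw1e : w1' = w2 := by rw [hlam] at hAeq; linarith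
    have hw2e : w2' = w1 := by rw [hlam] at hCeq; linarith
    have hlam' : lam' = -1 := by
      rw [hw1e] at hDeq
      have := mul_left_cancel₀ (ne_of_gt hw2) (by linear_combination hDeq : w2 * (-lam') = w2 * 1)
      linarith
    exact ⟨hw1e, hw2e, hlam, hlam'⟩
  · exfalso; rw [hl, zero_mul] at hll; linarith
  · -- lam > 0, lam' > 0 : identity case
    left
    have hl' : 0 < lam' := by nlinarith
    have hApos : 0 < w1' * lam := mul_pos hw1' hl
    have hBpos : 0 < w2' * lam' := mul_pos hw2' hl'
    have hCpos : 0 < w2' * lam := mul_pos hw2' hl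
    have hDpos : 0 < w1' * lam' := mul_pos hw1' hl'
    have hAB : (w1' * lam) * (w2' * lam') = w1 * w2 := by linear_combination hmul
    have hCD : (w2' * lam) * (w1' * lam') = w1 * w2 := by linear_combination hmul
    have hBge : w2 ≤ w2' * lam' := by
      nlinarith [mul_nonneg (sub_nonneg.mpr b1) (le_of_lt hBpos)]
    have hBeq : w2' * lam' = w2 := le_antisymm c2 hBge
    have hAeq : w1' * lam = w1 := by
      have h2 : (w1' * lam) * w2 = w1 * w2 := by linear_combination hAB - (w1' * lam) * hBeq
      exact mul_right_cancel₀ (ne_of_gt hw2) h2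
    have hCge : w2 ≤ w2' * lam := by
      nlinarith [mul_nonneg (sub_nonneg.mpr c1) (le_of_lt hCpos)]
    have hCeq : w2' * lam = w2 := le_antisymm b2 hCge
    have hDeq : w1' * lam' = w1 := by
      have h2 : (w1' * lam') * w2 = w1 * w2 := by linear_combination hCD - (w1' * lam') * hCeq
      exact mul_right_cancel₀ (ne_of_gt hw2) h2
    have hlam : lam = 1 := by
      linear_combination hAeq + hCeq - lam * hsum' + hw
    have hw1e : w1' = w1 := by rw [hlam] at hAeq; linarith
    have hw2e : w2' = w2 := by rw [hlam] at hCeq; linarith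
    have hlam' : lam' = 1 := by
      rw [hw1e] at hDeq
      have := mul_left_cancel₀ (ne_of_gt hw1) (by linear_combination hDeq : w1 * lam' = w1 * 1)
      linarith
    exact ⟨hw1e, hw2e, hlam, hlam'⟩

lemma s19_part1 (w1 w2 μ1x μ2x μ1y μ2y : ℝ)
    (hw1 : 0 < w1) (hw2 : 0 < w2)
    (h1x : w1 < μ1x) (h2x : w2 < μ2x) (h1y : w1 < μ1y) (h2y : w2 < μ2y) :
    ∀ γ w1' : ℝ, 0 < γ → 0 < w1' → w1' < 1 →
      ((μ2x - w2) / Real.sqrt (w1 * w2) ≤ (1 / γ) * Real.sqrt (w1' / (1 - w1'))) →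
      ((μ1x - w1) / Real.sqrt (w1 * w2) ≤ (1 / γ) * Real.sqrt ((1 - w1') / w1')) →
      ((μ2y - w2) / Real.sqrt (w1 * w2) ≤ γ * Real.sqrt (w1' / (1 - w1'))) →
      ((μ1y - w1) / Real.sqrt (w1 * w2) ≤ γ * Real.sqrt ((1 - w1') / w1')) →
      (μ2x - w2) * (μ2y - w2) / (w1 * w2) ≤ w1' / (1 - w1') ∧
        w1' / (1 - w1') ≤ w1 * w2 / ((μ1x - w1) * (μ1y - w1)) := by
  intro γ w1' hγ hw1' hw1'lt h1 h2 h3 h4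
  have hww : (0:ℝ) < w1 * w2 := mul_pos hw1 hw2
  have hs : 0 < Real.sqrt (w1 * w2) := Real.sqrt_pos.mpr hww
  have h1w : 0 < 1 - w1' := by linarith
  have hr : 0 ≤ w1' / (1 - w1') := div_nonneg (le_of_lt hw1') (le_of_lt h1w)
  have hr' : 0 ≤ (1 - w1') / w1' := div_nonneg (le_of_lt h1w) (le_of_lt hw1')
  constructor
  · have key := mul_le_mul h1 h3
      (div_nonneg (by linarith) (le_of_lt hs))
      (mul_nonneg (by positivity) (Real.sqrt_nonneg _))
    have e1 : (μ2x - w2) / Real.sqrt (w1 * w2) * ((μ2y - w2) / Real.sqrt (w1 * w2))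
        = (μ2x - w2) * (μ2y - w2) / (w1 * w2) := by
      rw [div_mul_div_comm, Real.mul_self_sqrt (le_of_lt hww)]
    have e2 : 1 / γ * Real.sqrt (w1' / (1 - w1')) * (γ * Real.sqrt (w1' / (1 - w1')))
        = w1' / (1 - w1') := by
      rw [show 1 / γ * Real.sqrt (w1' / (1 - w1')) * (γ * Real.sqrt (w1' / (1 - w1')))
        = (Real.sqrt (w1' / (1 - w1')) * Real.sqrt (w1' / (1 - w1'))) * (γ / γ) by ring,
        div_self (ne_of_gt hγ), mul_one, Real.mul_self_sqrt hr]
    rw [e1, e2] at key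
    exact key
  · have key := mul_le_mul h2 h4
      (div_nonneg (by linarith) (le_of_lt hs))
      (mul_nonneg (by positivity) (Real.sqrt_nonneg _))
    have e1 : (μ1x - w1) / Real.sqrt (w1 * w2) * ((μ1y - w1) / Real.sqrt (w1 * w2))
        = (μ1x - w1) * (μ1y - w1) / (w1 * w2) := by
      rw [div_mul_div_comm, Real.mul_self_sqrt (le_of_lt hww)]
    have e2 : 1 / γ * Real.sqrt ((1 - w1') / w1') * (γ * Real.sqrt ((1 - w1') / w1'))
        = (1 - w1') / w1' := by
      rw [show 1 / γ * Real.sqrt ((1 - w1') / w1') * (γ * Real.sqrt ((1 - w1') / w1'))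
        = (Real.sqrt ((1 - w1') / w1') * Real.sqrt ((1 - w1') / w1')) * (γ / γ) by ring,
        div_self (ne_of_gt hγ), mul_one, Real.mul_self_sqrt hr']
    rw [e1, e2] at key
    have hP : 0 < (μ1x - w1) * (μ1y - w1) := mul_pos (by linarith) (by linarith)
    rw [div_le_div_iff₀ hww hw1'] at key
    rw [div_le_div_iff₀ h1w hP]
    nlinarith

lemma s19_part2 (w1 w2 μ1x μ2x μ1y μ2y : ℝ)
    (hw1 : 0 < w1) (hw2 : 0 < w2) (hw : w1 + w2 = 1)
    (h1x : w1 < μ1x ∧ μ1x ≤ 1) (h2x : w2 < μ2x ∧ μ2x ≤ 1)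
    (h1y : w1 < μ1y ∧ μ1y ≤ 1) (h2y : w2 < μ2y ∧ μ2y ≤ 1) :
    ((μ2x - w2) * (μ2y - w2) / (w1 * w2) = w1 / w2 ∧
        w1 * w2 / ((μ1x - w1) * (μ1y - w1)) = w1 / w2)
      ↔ (μ1x = 1 ∧ μ2x = 1 ∧ μ1y = 1 ∧ μ2y = 1) := by
  have hww : (0:ℝ) < w1 * w2 := mul_pos hw1 hw2
  constructor
  · rintro ⟨e1, e2⟩
    have hP : 0 < (μ1x - w1) * (μ1y - w1) := mul_pos (by linarith [h1x.1]) (by linarith [h1y.1])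
    rw [div_eq_div_iff (ne_of_gt hww) (ne_of_gt hw2)] at e1
    rw [div_eq_div_iff (ne_of_gt hP) (ne_of_gt hw2)] at e2
    have e1' : (μ2x - w2) * (μ2y - w2) = w1 * w1 := by
      apply mul_right_cancel₀ (ne_of_gt hw2); linear_combination e1
    have e2' : (μ1x - w1) * (μ1y - w1) = w2 * w2 := by
      apply mul_left_cancel₀ (ne_of_gt hw1); linear_combination -e2
    have k2x : μ2x = 1 := by
      by_contra hne
      have hlt : μ2x < 1 := lt_of_le_of_ne h2x.2 hne
      nlinarith [e1', h2y.1, h2y.2, hw1, hw,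
        mul_pos (show (0:ℝ) < w1 - (μ2x - w2) by linarith)
          (show (0:ℝ) < μ2y - w2 by linarith [h2y.1]),
        mul_nonneg (le_of_lt hw1) (show (0:ℝ) ≤ w1 - (μ2y - w2) by linarith [h2y.2])]
    have k2y : μ2y = 1 := by
      by_contra hne
      have hlt : μ2y < 1 := lt_of_le_of_ne h2y.2 hne
      nlinarith [e1', h2x.1, h2x.2, hw1, hw,
        mul_pos (show (0:ℝ) < w1 - (μ2y - w2) by linarith)
          (show (0:ℝ) < μ2x - w2 by linarith [h2x.1]),
        mul_nonneg (le_of_lt hw1) (show (0:ℝ) ≤ w1 - (μ2x - w2) by linarith [h2x.2])]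
    have k1x : μ1x = 1 := by
      by_contra hne
      have hlt : μ1x < 1 := lt_of_le_of_ne h1x.2 hne
      nlinarith [e2', h1y.1, h1y.2, hw2, hw,
        mul_pos (show (0:ℝ) < w2 - (μ1x - w1) by linarith)
          (show (0:ℝ) < μ1y - w1 by linarith [h1y.1]),
        mul_nonneg (le_of_lt hw2) (show (0:ℝ) ≤ w2 - (μ1y - w1) by linarith [h1y.2])]
    have k1y : μ1y = 1 := by
      by_contra hne
      have hlt : μ1y < 1 := lt_of_le_of_ne h1y.2 hne
      nlinarith [e2', h1x.1, h1x.2, hw2, hw,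
        mul_pos (show (0:ℝ) < w2 - (μ1y - w1) by linarith)
          (show (0:ℝ) < μ1x - w1 by linarith [h1x.1]),
        mul_nonneg (le_of_lt hw2) (show (0:ℝ) ≤ w2 - (μ1x - w1) by linarith [h1x.2])]
    exact ⟨k1x, k2x, k1y, k2y⟩
  · rintro ⟨r1, r2, r3, r4⟩
    subst r1 r2 r3 r4
    have hv : w1 = 1 - w2 := by linarith
    subst hv
    constructor
    · rw [div_eq_div_iff (ne_of_gt hww) (ne_of_gt hw2)]; ring
    · have hP : 0 < (1 - (1 - w2)) * (1 - (1 - w2)) := by nlinarith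
      rw [div_eq_div_iff (ne_of_gt hP) (ne_of_gt hw2)]; ring

lemma s19_star {X : Type*} [MeasurableSpace X] (μ : Measure X) (w1 w2 : ℝ)
    (hw1 : 0 < w1) (hw2 : 0 < w2) (F1 F2 : X → ℝ)
    (h1 : ∀ x, 0 ≤ F1 x) (h2 : ∀ x, 0 ≤ F2 x)
    (hm1 : Measurable F1) (hm2 : Measurable F2)
    (hi1 : Integrable F1 μ) (hi2 : Integrable F2 μ)
    (ho1 : ∫ x, F1 x ∂μ = 1) (ho2 : ∫ x, F2 x ∂μ = 1)
    (hsup : essSup (fun x => w1 * F1 x / (w1 * F1 x + w2 * F2 x))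
        (μ.withDensity (fun x => ENNReal.ofReal (w1 * F1 x + w2 * F2 x))) = 1) :
    ∀ ε : ℝ, 0 < ε → ¬ (∀ᵐ x ∂μ, ¬ (0 < w1 * F1 x + w2 * F2 x ∧
      (1 - ε) * (w1 * F1 x + w2 * F2 x) < w1 * F1 x)) := by
  intro ε hε hae
  have hmeas : Measurable (fun x => ENNReal.ofReal (w1 * F1 x + w2 * F2 x)) :=
    ((hm1.const_mul w1).add (hm2.const_mul w2)).ennreal_ofReal
  have hρ0 : μ.withDensity (fun x => ENNReal.ofReal (w1 * F1 x + w2 * F2 x)) ≠ 0 := by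
    intro h0
    have huniv : (μ.withDensity (fun x => ENNReal.ofReal (w1 * F1 x + w2 * F2 x))) Set.univ
        = ENNReal.ofReal (w1 + w2) := by
      have hint : Integrable (fun x => w1 * F1 x + w2 * F2 x) μ :=
        (hi1.const_mul w1).add (hi2.const_mul w2)
      rw [withDensity_apply _ MeasurableSet.univ, Measure.restrict_univ,
        ← ofReal_integral_eq_lintegral_ofReal hint
          (Eventually.of_forall fun x =>
            add_nonneg (mul_nonneg hw1.le (h1 x)) (mul_nonneg hw2.le (h2 x)))]
      congr 1
      rw [integral_add (hi1.const_mul w1) (hi2.const_mul w2),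
        integral_const_mul, integral_const_mul, ho1, ho2, mul_one, mul_one]
    rw [h0] at huniv
    simp only [Measure.coe_zero, Pi.zero_apply] at huniv
    have : (0:ℝ) < w1 + w2 := by linarith
    rw [eq_comm, ENNReal.ofReal_eq_zero] at huniv
    linarith
  haveI : NeBot (ae (μ.withDensity (fun x => ENNReal.ofReal (w1 * F1 x + w2 * F2 x)))) :=
    ae_neBot.mpr hρ0
  have hb : ∀ᵐ x ∂(μ.withDensity (fun x => ENNReal.ofReal (w1 * F1 x + w2 * F2 x))),
      (fun x => w1 * F1 x / (w1 * F1 x + w2 * F2 x)) x ≤ 1 - ε := by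
    rw [ae_withDensity_iff hmeas]
    filter_upwards [hae] with x hx hsne
    have hspos : 0 < w1 * F1 x + w2 * F2 x :=
      lt_of_le_of_ne (add_nonneg (mul_nonneg hw1.le (h1 x)) (mul_nonneg hw2.le (h2 x)))
        (fun h => hsne (by rw [ENNReal.ofReal_eq_zero]; linarith))
    have hle : w1 * F1 x ≤ (1 - ε) * (w1 * F1 x + w2 * F2 x) := by
      by_contra hgt; push_neg at hgt; exact hx ⟨hspos, hgt⟩
    rw [div_le_iff₀ hspos]; linarith
  have hbd : IsBoundedUnder (· ≥ ·)
      (ae (μ.withDensity (fun x => ENNReal.ofReal (w1 * F1 x + w2 * F2 x))))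
      (fun x => w1 * F1 x / (w1 * F1 x + w2 * F2 x)) :=
    isBoundedUnder_of ⟨0, fun x => div_nonneg (mul_nonneg hw1.le (h1 x))
      (add_nonneg (mul_nonneg hw1.le (h1 x)) (mul_nonneg hw2.le (h2 x)))⟩
  have hess := limsup_le_of_le hbd.isCoboundedUnder_le hb
  rw [show limsup (fun x => w1 * F1 x / (w1 * F1 x + w2 * F2 x))
      (ae (μ.withDensity (fun x => ENNReal.ofReal (w1 * F1 x + w2 * F2 x))))
    = essSup (fun x => w1 * F1 x / (w1 * F1 x + w2 * F2 x))
      (μ.withDensity (fun x => ENNReal.ofReal (w1 * F1 x + w2 * F2 x))) from rfl,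
    hsup] at hess
  linarith

lemma s19_slack {X : Type*} [MeasurableSpace X] (μ : Measure X) (w1 w2 : ℝ)
    (hw1 : 0 < w1) (hw2 : 0 < w2) (F1 F2 : X → ℝ)
    (h1 : ∀ x, 0 ≤ F1 x) (h2 : ∀ x, 0 ≤ F2 x)
    (hm1 : Measurable F1) (hm2 : Measurable F2)
    (r : ℝ) (hrpos : 0 < r) (hrlt : r < 1)
    (hsup : essSup (fun x => w1 * F1 x / (w1 * F1 x + w2 * F2 x))
        (μ.withDensity (fun x => ENNReal.ofReal (w1 * F1 x + w2 * F2 x))) = r) :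
    ∃ c : ℝ, 0 < c ∧ ∀ᵐ x ∂μ, c * F1 x ≤ F2 x := by
  have hmeas : Measurable (fun x => ENNReal.ofReal (w1 * F1 x + w2 * F2 x)) :=
    ((hm1.const_mul w1).add (hm2.const_mul w2)).ennreal_ofReal
  refine ⟨w1 * (1 - r) / (r * w2), div_pos (mul_pos hw1 (by linarith)) (mul_pos hrpos hw2), ?_⟩
  have hbound : ∀ x, (fun x => w1 * F1 x / (w1 * F1 x + w2 * F2 x)) x ≤ 1 := by
    intro x
    rcases lt_or_eq_of_le (add_nonneg (mul_nonneg hw1.le (h1 x))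
      (mul_nonneg hw2.le (h2 x))) with hs | hs
    · exact div_le_one_of_le₀ (by nlinarith [h2 x]) (le_of_lt hs)
    · simp only
      rw [← hs, div_zero]; norm_num
  have hb : ∀ᵐ x ∂(μ.withDensity (fun x => ENNReal.ofReal (w1 * F1 x + w2 * F2 x))),
      (fun x => w1 * F1 x / (w1 * F1 x + w2 * F2 x)) x ≤ r := by
    rw [← hsup]
    exact ae_le_essSup (isBoundedUnder_of ⟨1, hbound⟩)
  rw [ae_withDensity_iff hmeas] at hb
  filter_upwards [hb] with x hx
  by_cases hs : 0 < w1 * F1 x + w2 * F2 x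
  · have hfr : w1 * F1 x / (w1 * F1 x + w2 * F2 x) ≤ r :=
      hx (by rw [Ne, ENNReal.ofReal_eq_zero]; push_neg; exact hs)
    rw [div_le_iff₀ hs] at hfr
    rw [div_mul_eq_mul_div, div_le_iff₀ (by positivity)]
    nlinarith [h1 x, h2 x]
  · have h0 : F1 x = 0 := by
      have hs' : w1 * F1 x + w2 * F2 x ≤ 0 := le_of_not_gt hs
      nlinarith [h1 x, h2 x, mul_nonneg hw1.le (h1 x), mul_nonneg hw2.le (h2 x)]
    rw [h0, mul_zero]; exact h2 x

lemma s19_master {X Y : Type*} [MeasurableSpace X] [MeasurableSpace Y]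
    (μ : Measure X) (ν : Measure Y) [SigmaFinite μ] [SigmaFinite ν]
    (w1 w2 : ℝ) (hw1 : 0 < w1) (hw2 : 0 < w2) (hw : w1 + w2 = 1)
    (f1x f2x : X → ℝ) (f1y f2y : Y → ℝ)
    (hm1x : Measurable f1x) (hm2x : Measurable f2x)
    (hm1y : Measurable f1y) (hm2y : Measurable f2y)
    (h01x : ∀ x, 0 ≤ f1x x) (h02x : ∀ x, 0 ≤ f2x x)
    (h01y : ∀ y, 0 ≤ f1y y) (h02y : ∀ y, 0 ≤ f2y y)
    (hi1x : Integrable f1x μ) (hi2x : Integrable f2x μ)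
    (hi1y : Integrable f1y ν) (hi2y : Integrable f2y ν)
    (ho1x : ∫ x, f1x x ∂μ = 1) (ho2x : ∫ x, f2x x ∂μ = 1)
    (ho1y : ∫ y, f1y y ∂ν = 1) (ho2y : ∫ y, f2y y ∂ν = 1)
    (c : ℝ) (hc : 0 < c) (hslack : ∀ᵐ x ∂μ, c * f1x x ≤ f2x x) :
    ∃ (w1' w2' : ℝ) (g1x g2x : X → ℝ) (g1y g2y : Y → ℝ),
      0 ≤ w1' ∧ 0 ≤ w2' ∧ w1' + w2' = 1 ∧
      Measurable g1x ∧ Measurable g2x ∧ Measurable g1y ∧ Measurable g2y ∧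
      (∀ x, 0 ≤ g1x x) ∧ (∀ x, 0 ≤ g2x x) ∧ (∀ y, 0 ≤ g1y y) ∧ (∀ y, 0 ≤ g2y y) ∧
      (∫ x, g1x x ∂μ = 1) ∧ (∫ x, g2x x ∂μ = 1) ∧
      (∫ y, g1y y ∂ν = 1) ∧ (∫ y, g2y y ∂ν = 1) ∧
      (∀ᵐ p ∂(μ.prod ν),
        w1' * g1x p.1 * g1y p.2 + w2' * g2x p.1 * g2y p.2
          = w1 * f1x p.1 * f1y p.2 + w2 * f2x p.1 * f2y p.2) ∧
      w1' ≠ w1 ∧ w1' ≠ w2 := by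
  classical
  -- choose a perturbation size t
  obtain ⟨t, htpos, htcw2, htw2, hneq⟩ :
      ∃ t : ℝ, 0 < t ∧ t ≤ c * w2 / 2 ∧ t < w2 ∧ (w1 < w2 → w1 + t < w2) := by
    by_cases hlt : w1 < w2
    · refine ⟨min (c * w2 / 2) ((w2 - w1) / 2), ?_, min_le_left _ _, ?_, fun _ => ?_⟩
      · apply lt_min (by positivity) (by linarith)
      · have := min_le_right (c * w2 / 2) ((w2 - w1) / 2); linarith
      · have := min_le_right (c * w2 / 2) ((w2 - w1) / 2); linarith
    · refine ⟨min (c * w2 / 2) (w2 / 2), ?_, min_le_left _ _, ?_, fun h => absurd h hlt⟩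
      · apply lt_min (by positivity) (by linarith)
      · have := min_le_right (c * w2 / 2) (w2 / 2); linarith
  set w1' : ℝ := w1 + t with hw1'
  set w2' : ℝ := w2 - t with hw2'
  have hw1'pos : 0 < w1' := by rw [hw1']; linarith
  have hw2'pos : 0 < w2' := by rw [hw2']; linarith
  have hsum : w1' + w2' = 1 := by rw [hw1', hw2']; linarith
  have hne1 : w1' ≠ w1 := by rw [hw1']; intro h; linarith
  have hne2 : w1' ≠ w2 := by
    rw [hw1']; intro h
    rcases lt_or_ge w1 w2 with hlt | hle
    · exact absurd h (ne_of_lt (hneq hlt))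
    · linarith
  obtain ⟨ca, hpw⟩ : ∃ ca : ℝ, ca * w2' = w1' * w2 :=
    ⟨w1' * w2 / w2', div_mul_cancel₀ _ (ne_of_gt hw2'pos)⟩
  obtain ⟨cb, hqw⟩ : ∃ cb : ℝ, cb * w1' = w2' * w1 :=
    ⟨w2' * w1 / w1', div_mul_cancel₀ _ (ne_of_gt hw1'pos)⟩
  have hppos : 0 ≤ ca := by nlinarith [mul_pos hw1'pos hw2]
  have hqpos : 0 ≤ cb := by nlinarith [mul_pos hw2'pos hw1]
  have hB2 : 0 ≤ w2 - cb := by nlinarith [htpos, mul_pos hw1 htpos]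
  have hA2 : 0 ≤ w2 + ca := by linarith
  have hAc : 0 ≤ (w1 - ca) + c * (w2 + ca) := by
    have h' : ((w1 - ca) + c * (w2 + ca)) * w2' = c * w2 - t := by
      have e : ((w1 - ca) + c * (w2 + ca)) * w2'
          = w1 * w2' - ca * w2' + c * (w2 * w2') + c * (ca * w2') := by ring
      rw [e, hpw, hw1', hw2']
      linear_combination (c * w2 - t) * hw
    nlinarith [h', hw2'pos, htcw2, mul_pos hc hw2]
  -- the alternative component densities
  have hg2x_ae : ∀ᵐ x ∂μ,
      max ((w1 - ca) * f1x x + (w2 + ca) * f2x x) 0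
        = (w1 - ca) * f1x x + (w2 + ca) * f2x x := by
    filter_upwards [hslack] with x hx
    have hnn : 0 ≤ (w1 - ca) * f1x x + (w2 + ca) * f2x x := by
      have h1 : (w2 + ca) * (c * f1x x) ≤ (w2 + ca) * f2x x :=
        mul_le_mul_of_nonneg_left hx hA2
      nlinarith [mul_nonneg hAc (h01x x)]
    exact max_eq_left hnn
  have hmain : ∀ᵐ pt : X × Y ∂(μ.prod ν),
      max ((w1 - ca) * f1x pt.1 + (w2 + ca) * f2x pt.1) 0
        = (w1 - ca) * f1x pt.1 + (w2 + ca) * f2x pt.1 := s19_ae_fst μ ν hg2x_ae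
  refine ⟨w1', w2', f1x, (fun x => max ((w1 - ca) * f1x x + (w2 + ca) * f2x x) 0),
    (fun y => (w1 + cb) * f1y y + (w2 - cb) * f2y y), f2y,
    le_of_lt hw1'pos, le_of_lt hw2'pos, hsum,
    hm1x, ((hm1x.const_mul _).add (hm2x.const_mul _)).max measurable_const,
    (hm1y.const_mul _).add (hm2y.const_mul _), hm2y,
    h01x, (fun x => le_max_right _ _),
    (fun y => add_nonneg (mul_nonneg (by linarith) (h01y y)) (mul_nonneg hB2 (h02y y))),
    h02y, ho1x, ?_, ?_, ho2y, ?_, hne1, hne2⟩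
  · rw [integral_congr_ae hg2x_ae, integral_add ((hi1x.const_mul _)) ((hi2x.const_mul _)),
      integral_const_mul, integral_const_mul, ho1x, ho2x]
    linarith
  · rw [integral_add ((hi1y.const_mul _)) ((hi2y.const_mul _)),
      integral_const_mul, integral_const_mul, ho1y, ho2y]
    linarith
  · -- joint density identity
    have k1 : w1' * (w1 + cb) = w1 := by linear_combination hqw + w1 * hsum
    have k3 : w2' * (w2 + ca) = w2 := by linear_combination hpw + w2 * hsum
    have k2 : w1' * (w2 - cb) + w2' * (w1 - ca) = 0 := by
      linear_combination (-1 : ℝ) * hqw + (-1 : ℝ) * hpw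
    filter_upwards [hmain] with pt hpt
    rw [hpt]
    linear_combination (f1x pt.1 * f1y pt.2) * k1 + (f1x pt.1 * f2y pt.2) * k2
      + (f2x pt.1 * f2y pt.2) * k3

lemma s19_backward {X Y : Type*} [MeasurableSpace X] [MeasurableSpace Y]
    (μ : Measure X) (ν : Measure Y) [SigmaFinite μ] [SigmaFinite ν]
    (w1 w2 : ℝ) (hw1 : 0 < w1) (hw2 : 0 < w2) (hw : w1 + w2 = 1)
    (f1x f2x : X → ℝ) (f1y f2y : Y → ℝ)
    (hm1x : Measurable f1x) (hm2x : Measurable f2x)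
    (hm1y : Measurable f1y) (hm2y : Measurable f2y)
    (h01x : ∀ x, 0 ≤ f1x x) (h02x : ∀ x, 0 ≤ f2x x)
    (h01y : ∀ y, 0 ≤ f1y y) (h02y : ∀ y, 0 ≤ f2y y)
    (hi1x : Integrable f1x μ) (hi2x : Integrable f2x μ)
    (hi1y : Integrable f1y ν) (hi2y : Integrable f2y ν)
    (ho1x : ∫ x, f1x x ∂μ = 1) (ho2x : ∫ x, f2x x ∂μ = 1)
    (ho1y : ∫ y, f1y y ∂ν = 1) (ho2y : ∫ y, f2y y ∂ν = 1)
    (hΔx : ¬ (f1x =ᵐ[μ] f2x)) (hΔy : ¬ (f1y =ᵐ[ν] f2y))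
    (hstar1x : ∀ ε : ℝ, 0 < ε → ¬ (∀ᵐ x ∂μ, ¬ (0 < w1 * f1x x + w2 * f2x x ∧
      (1 - ε) * (w1 * f1x x + w2 * f2x x) < w1 * f1x x)))
    (hstar2x : ∀ ε : ℝ, 0 < ε → ¬ (∀ᵐ x ∂μ, ¬ (0 < w2 * f2x x + w1 * f1x x ∧
      (1 - ε) * (w2 * f2x x + w1 * f1x x) < w2 * f2x x)))
    (hstar1y : ∀ ε : ℝ, 0 < ε → ¬ (∀ᵐ y ∂ν, ¬ (0 < w1 * f1y y + w2 * f2y y ∧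
      (1 - ε) * (w1 * f1y y + w2 * f2y y) < w1 * f1y y)))
    (hstar2y : ∀ ε : ℝ, 0 < ε → ¬ (∀ᵐ y ∂ν, ¬ (0 < w2 * f2y y + w1 * f1y y ∧
      (1 - ε) * (w2 * f2y y + w1 * f1y y) < w2 * f2y y)))
    (w1' w2' : ℝ) (g1x g2x : X → ℝ) (g1y g2y : Y → ℝ)
    (hw1'0 : 0 ≤ w1') (hw2'0 : 0 ≤ w2') (hsum' : w1' + w2' = 1)
    (hmg1x : Measurable g1x) (hmg2x : Measurable g2x)
    (hmg1y : Measurable g1y) (hmg2y : Measurable g2y)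
    (h0g1x : ∀ x, 0 ≤ g1x x) (h0g2x : ∀ x, 0 ≤ g2x x)
    (h0g1y : ∀ y, 0 ≤ g1y y) (h0g2y : ∀ y, 0 ≤ g2y y)
    (hog1x : ∫ x, g1x x ∂μ = 1) (hog2x : ∫ x, g2x x ∂μ = 1)
    (hog1y : ∫ y, g1y y ∂ν = 1) (hog2y : ∫ y, g2y y ∂ν = 1)
    (hE : ∀ᵐ p ∂(μ.prod ν),
      w1' * g1x p.1 * g1y p.2 + w2' * g2x p.1 * g2y p.2
        = w1 * f1x p.1 * f1y p.2 + w2 * f2x p.1 * f2y p.2) :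
    (w1' = w1 ∧ w2' = w2 ∧ g1x =ᵐ[μ] f1x ∧ g2x =ᵐ[μ] f2x ∧
        g1y =ᵐ[ν] f1y ∧ g2y =ᵐ[ν] f2y) ∨
      (w1' = w2 ∧ w2' = w1 ∧ g1x =ᵐ[μ] f2x ∧ g2x =ᵐ[μ] f1x ∧
        g1y =ᵐ[ν] f2y ∧ g2y =ᵐ[ν] f1y) := by
  -- the g's are integrable since they are densities
  have hgi1x : Integrable g1x μ := by
    by_contra h; rw [integral_undef h] at hog1x; norm_num at hog1x
  have hgi2x : Integrable g2x μ := by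
    by_contra h; rw [integral_undef h] at hog2x; norm_num at hog2x
  have hgi1y : Integrable g1y ν := by
    by_contra h; rw [integral_undef h] at hog1y; norm_num at hog1y
  have hgi2y : Integrable g2y ν := by
    by_contra h; rw [integral_undef h] at hog2y; norm_num at hog2y
  -- marginal in x
  have hmargx : ∀ᵐ x ∂μ, w1' * g1x x + w2' * g2x x = w1 * f1x x + w2 * f2x x := by
    filter_upwards [Measure.ae_ae_of_ae_prod hE] with x hx
    have hL := integral_congr_ae hx
    rw [integral_add ((hgi1y.const_mul _)) ((hgi2y.const_mul _)),
      integral_add ((hi1y.const_mul _)) ((hi2y.const_mul _)),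
      integral_const_mul, integral_const_mul, integral_const_mul, integral_const_mul,
      hog1y, hog2y, ho1y, ho2y] at hL
    linarith
  -- marginal in y
  have hEswap : ∀ᵐ p ∂(ν.prod μ),
      w1' * g1x p.2 * g1y p.1 + w2' * g2x p.2 * g2y p.1
        = w1 * f1x p.2 * f1y p.1 + w2 * f2x p.2 * f2y p.1 :=
    s19_ae_swap ν μ (P := fun q : X × Y =>
      w1' * g1x q.1 * g1y q.2 + w2' * g2x q.1 * g2y q.2
        = w1 * f1x q.1 * f1y q.2 + w2 * f2x q.1 * f2y q.2) hE
  have hmargy : ∀ᵐ y ∂ν, w1' * g1y y + w2' * g2y y = w1 * f1y y + w2 * f2y y := by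
    filter_upwards [Measure.ae_ae_of_ae_prod hEswap] with y hy
    have hL := integral_congr_ae hy
    rw [integral_add ((hgi1x.const_mul w1').mul_const _) ((hgi2x.const_mul w2').mul_const _),
      integral_add ((hi1x.const_mul _).mul_const _) ((hi2x.const_mul _).mul_const _),
      integral_mul_const, integral_mul_const, integral_mul_const, integral_mul_const,
      integral_const_mul, integral_const_mul, integral_const_mul, integral_const_mul,
      hog1x, hog2x, ho1x, ho2x] at hL
    linarith
  -- product (rank-one) identity
  have hprodid : ∀ᵐ p ∂(μ.prod ν),
      w1' * w2' * ((g1x p.1 - g2x p.1) * (g1y p.2 - g2y p.2))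
        = w1 * w2 * ((f1x p.1 - f2x p.1) * (f1y p.2 - f2y p.2)) := by
    filter_upwards [hE, s19_ae_fst μ ν hmargx, s19_ae_snd μ ν hmargy] with p h1 h2 h3
    linear_combination (w1' * g1x p.1 * g1y p.2 + w2' * g2x p.1 * g2y p.2) * hsum'
      - (w1 * f1x p.1 * f1y p.2 + w2 * f2x p.1 * f2y p.2) * hw
      + h1 - (w1' * g1y p.2 + w2' * g2y p.2) * h2 - (w1 * f1x p.1 + w2 * f2x p.1) * h3
  -- the sets where the components differ have positive measure
  have hANx : μ {x | ¬ (f1x x = f2x x)} ≠ 0 := fun h0 => hΔx (ae_iff.mpr h0)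
  have hANy : ν {y | ¬ (f1y y = f2y y)} ≠ 0 := fun h0 => hΔy (ae_iff.mpr h0)
  -- both alternative weights are nonzero
  have hwprod : w1' * w2' ≠ 0 := by
    intro h0
    have hz : (μ.prod ν) {p : X × Y |
        ¬ (w1 * w2 * ((f1x p.1 - f2x p.1) * (f1y p.2 - f2y p.2)) = 0)} = 0 := by
      rw [← ae_iff]
      filter_upwards [hprodid] with p hp
      linear_combination -hp + ((g1x p.1 - g2x p.1) * (g1y p.2 - g2y p.2)) * h0
    have hsub : ({x | ¬ (f1x x = f2x x)} ×ˢ {y | ¬ (f1y y = f2y y)} : Set (X × Y)) ⊆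
        {p : X × Y | ¬ (w1 * w2 * ((f1x p.1 - f2x p.1) * (f1y p.2 - f2y p.2)) = 0)} := by
      rintro ⟨x, y⟩ ⟨hx, hy⟩
      simp only [Set.mem_setOf_eq] at hx hy ⊢
      intro heq
      have hne : (f1x x - f2x x) * (f1y y - f2y y) ≠ 0 :=
        mul_ne_zero (sub_ne_zero.mpr hx) (sub_ne_zero.mpr hy)
      exact hne (by
        rcases mul_eq_zero.mp heq with h | h
        · exact absurd h (ne_of_gt (mul_pos hw1 hw2))
        · exact h)
    have h0' := measure_mono_null hsub hz
    rw [Measure.prod_prod] at h0'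
    exact (mul_ne_zero hANx hANy) h0'
  have hw1'pos : 0 < w1' := lt_of_le_of_ne hw1'0 (by intro h; exact hwprod (by rw [← h, zero_mul]))
  have hw2'pos : 0 < w2' := lt_of_le_of_ne hw2'0 (by intro h; exact hwprod (by rw [← h, mul_zero]))
  -- factorization: find y0 with f1y y0 ≠ f2y y0 and the a.e.-x slice property
  have hprodswap : ∀ᵐ p ∂(ν.prod μ),
      w1' * w2' * ((g1x p.2 - g2x p.2) * (g1y p.1 - g2y p.1))
        = w1 * w2 * ((f1x p.2 - f2x p.2) * (f1y p.1 - f2y p.1)) :=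
    s19_ae_swap ν μ (P := fun q : X × Y =>
      w1' * w2' * ((g1x q.1 - g2x q.1) * (g1y q.2 - g2y q.2))
        = w1 * w2 * ((f1x q.1 - f2x q.1) * (f1y q.2 - f2y q.2))) hprodid
  have hyslice := Measure.ae_ae_of_ae_prod hprodswap
  obtain ⟨y0, hy0ne, hy0slice⟩ : ∃ y0, ¬ (f1y y0 = f2y y0) ∧
      ∀ᵐ x ∂μ, w1' * w2' * ((g1x x - g2x x) * (g1y y0 - g2y y0))
        = w1 * w2 * ((f1x x - f2x x) * (f1y y0 - f2y y0)) := by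
    rw [ae_iff] at hyslice
    have hkey : ν ({y | ¬ (f1y y = f2y y)} \
        {y | ¬ (∀ᵐ x ∂μ, w1' * w2' * ((g1x x - g2x x) * (g1y y - g2y y))
          = w1 * w2 * ((f1x x - f2x x) * (f1y y - f2y y)))}) ≠ 0 := by
      intro hc
      apply hANy
      have hA : {y | ¬ (f1y y = f2y y)} ⊆
          ({y | ¬ (f1y y = f2y y)} \
            {y | ¬ (∀ᵐ x ∂μ, w1' * w2' * ((g1x x - g2x x) * (g1y y - g2y y))
              = w1 * w2 * ((f1x x - f2x x) * (f1y y - f2y y)))}) ∪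
          {y | ¬ (∀ᵐ x ∂μ, w1' * w2' * ((g1x x - g2x x) * (g1y y - g2y y))
              = w1 * w2 * ((f1x x - f2x x) * (f1y y - f2y y)))} := by
        intro y hy
        by_cases h : y ∈ {y | ¬ (∀ᵐ x ∂μ, w1' * w2' * ((g1x x - g2x x) * (g1y y - g2y y))
              = w1 * w2 * ((f1x x - f2x x) * (f1y y - f2y y)))}
        · exact Or.inr h
        · exact Or.inl ⟨hy, h⟩
      refine le_antisymm (le_trans (measure_mono hA)
        (le_trans (measure_union_le _ _) ?_)) zero_le
      rw [hc, hyslice, add_zero]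
    obtain ⟨y0, hy0⟩ := nonempty_of_measure_ne_zero hkey
    exact ⟨y0, hy0.1, not_not.mp hy0.2⟩
  -- factorization
  have hww : (0:ℝ) < w1 * w2 := mul_pos hw1 hw2
  have hby0 : f1y y0 - f2y y0 ≠ 0 := sub_ne_zero.mpr hy0ne
  by_cases hv0 : g1y y0 - g2y y0 = 0
  · exfalso
    apply hΔx
    filter_upwards [hy0slice] with x hx
    have h' : w1 * w2 * ((f1x x - f2x x) * (f1y y0 - f2y y0)) = 0 := by
      rw [← hx, hv0]; ring
    have h'' := (mul_eq_zero.mp h').resolve_left (ne_of_gt hww)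
    have := (mul_eq_zero.mp h'').resolve_right hby0
    linarith
  have hdenne : w1' * w2' * (g1y y0 - g2y y0) ≠ 0 := mul_ne_zero hwprod hv0
  set lam : ℝ := w1 * w2 * (f1y y0 - f2y y0) / (w1' * w2' * (g1y y0 - g2y y0)) with hlamdef
  have hu : ∀ᵐ x ∂μ, g1x x - g2x x = lam * (f1x x - f2x x) := by
    filter_upwards [hy0slice] with x hx
    rw [hlamdef, div_mul_eq_mul_div, eq_comm, div_eq_iff hdenne]
    linear_combination -hx
  have hlamne : lam ≠ 0 := by
    rw [hlamdef]
    exact div_ne_zero (mul_ne_zero (ne_of_gt hww) hby0) hdenne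
  -- pick x0
  have hxslice := Measure.ae_ae_of_ae_prod hprodid
  obtain ⟨x0, hx0ne, hx0slice, hx0u⟩ : ∃ x0, ¬ (f1x x0 = f2x x0) ∧
      (∀ᵐ y ∂ν, w1' * w2' * ((g1x x0 - g2x x0) * (g1y y - g2y y))
        = w1 * w2 * ((f1x x0 - f2x x0) * (f1y y - f2y y))) ∧
      g1x x0 - g2x x0 = lam * (f1x x0 - f2x x0) := by
    have hcomb := hxslice.and hu
    rw [ae_iff] at hcomb
    have hkey : μ ({x | ¬ (f1x x = f2x x)} \
        {x | ¬ ((∀ᵐ y ∂ν, w1' * w2' * ((g1x x - g2x x) * (g1y y - g2y y))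
            = w1 * w2 * ((f1x x - f2x x) * (f1y y - f2y y))) ∧
          g1x x - g2x x = lam * (f1x x - f2x x))}) ≠ 0 := by
      intro hc
      apply hANx
      have hA : {x | ¬ (f1x x = f2x x)} ⊆
          ({x | ¬ (f1x x = f2x x)} \
            {x | ¬ ((∀ᵐ y ∂ν, w1' * w2' * ((g1x x - g2x x) * (g1y y - g2y y))
                = w1 * w2 * ((f1x x - f2x x) * (f1y y - f2y y))) ∧
              g1x x - g2x x = lam * (f1x x - f2x x))}) ∪
          {x | ¬ ((∀ᵐ y ∂ν, w1' * w2' * ((g1x x - g2x x) * (g1y y - g2y y))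
              = w1 * w2 * ((f1x x - f2x x) * (f1y y - f2y y))) ∧
            g1x x - g2x x = lam * (f1x x - f2x x))} := by
        intro x hx
        by_cases h : x ∈ {x | ¬ ((∀ᵐ y ∂ν, w1' * w2' * ((g1x x - g2x x) * (g1y y - g2y y))
              = w1 * w2 * ((f1x x - f2x x) * (f1y y - f2y y))) ∧
            g1x x - g2x x = lam * (f1x x - f2x x))}
        · exact Or.inr h
        · exact Or.inl ⟨hx, h⟩
      refine le_antisymm (le_trans (measure_mono hA)
        (le_trans (measure_union_le _ _) ?_)) zero_le
      rw [hc, hcomb, add_zero]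
    obtain ⟨x0, hx0⟩ := nonempty_of_measure_ne_zero hkey
    have h2 := not_not.mp hx0.2
    exact ⟨x0, hx0.1, h2.1, h2.2⟩
  have hax0 : f1x x0 - f2x x0 ≠ 0 := sub_ne_zero.mpr hx0ne
  have hden2 : w1' * w2' * lam ≠ 0 := mul_ne_zero hwprod hlamne
  set lam' : ℝ := w1 * w2 / (w1' * w2' * lam) with hlam'def
  have hv : ∀ᵐ y ∂ν, g1y y - g2y y = lam' * (f1y y - f2y y) := by
    filter_upwards [hx0slice] with y hy
    rw [hx0u] at hy
    have h' : ((w1' * w2' * lam) * (g1y y - g2y y)) * (f1x x0 - f2x x0)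
        = (w1 * w2 * (f1y y - f2y y)) * (f1x x0 - f2x x0) := by linear_combination hy
    have h'' := mul_right_cancel₀ hax0 h'
    rw [hlam'def, div_mul_eq_mul_div, eq_comm, div_eq_iff hden2]
    linear_combination -h''
  have hmul : w1' * w2' * (lam * lam') = w1 * w2 := by
    have h0 : lam' * (w1' * w2' * lam) = w1 * w2 := by
      rw [hlam'def]; exact div_mul_cancel₀ _ hden2
    linear_combination h0
  -- a.e. representations of the alternative components
  have hg1xr : ∀ᵐ x ∂μ, g1x x = (w1 + w2' * lam) * f1x x + (w2 - w2' * lam) * f2x x := by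
    filter_upwards [hmargx, hu] with x h1 h2
    linear_combination h1 + w2' * h2 - g1x x * hsum'
  have hg2xr : ∀ᵐ x ∂μ, g2x x = (w1 - w1' * lam) * f1x x + (w2 + w1' * lam) * f2x x := by
    filter_upwards [hmargx, hu] with x h1 h2
    linear_combination h1 - w1' * h2 - g2x x * hsum'
  have hg1yr : ∀ᵐ y ∂ν, g1y y = (w1 + w2' * lam') * f1y y + (w2 - w2' * lam') * f2y y := by
    filter_upwards [hmargy, hv] with y h1 h2
    linear_combination h1 + w2' * h2 - g1y y * hsum'
  have hg2yr : ∀ᵐ y ∂ν, g2y y = (w1 - w1' * lam') * f1y y + (w2 + w1' * lam') * f2y y := by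
    filter_upwards [hmargy, hv] with y h1 h2
    linear_combination h1 - w1' * h2 - g2y y * hsum'
  -- the eight coefficient inequalities
  have b1' : 0 ≤ w1 - w1' * lam :=
    s19_coeff_nonneg μ w1 w2 _ _ hw1 hw2 f1x f2x h01x h02x hstar1x
      (by filter_upwards [hg2xr] with x hx; rw [← hx]; exact h0g2x x)
  have b3' : 0 ≤ w1 + w2' * lam :=
    s19_coeff_nonneg μ w1 w2 _ _ hw1 hw2 f1x f2x h01x h02x hstar1x
      (by filter_upwards [hg1xr] with x hx; rw [← hx]; exact h0g1x x)
  have b2' : 0 ≤ w2 - w2' * lam :=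
    s19_coeff_nonneg μ w2 w1 (w2 - w2' * lam) (w1 + w2' * lam) hw2 hw1 f2x f1x h02x h01x hstar2x
      (by filter_upwards [hg1xr] with x hx
          have h0 := h0g1x x; rw [hx] at h0; linarith)
  have b4' : 0 ≤ w2 + w1' * lam :=
    s19_coeff_nonneg μ w2 w1 (w2 + w1' * lam) (w1 - w1' * lam) hw2 hw1 f2x f1x h02x h01x hstar2x
      (by filter_upwards [hg2xr] with x hx
          have h0 := h0g2x x; rw [hx] at h0; linarith)
  have c1' : 0 ≤ w1 - w1' * lam' :=
    s19_coeff_nonneg ν w1 w2 _ _ hw1 hw2 f1y f2y h01y h02y hstar1y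
      (by filter_upwards [hg2yr] with y hy; rw [← hy]; exact h0g2y y)
  have c3' : 0 ≤ w1 + w2' * lam' :=
    s19_coeff_nonneg ν w1 w2 _ _ hw1 hw2 f1y f2y h01y h02y hstar1y
      (by filter_upwards [hg1yr] with y hy; rw [← hy]; exact h0g1y y)
  have c2' : 0 ≤ w2 - w2' * lam' :=
    s19_coeff_nonneg ν w2 w1 (w2 - w2' * lam') (w1 + w2' * lam') hw2 hw1 f2y f1y h02y h01y hstar2y
      (by filter_upwards [hg1yr] with y hy
          have h0 := h0g1y y; rw [hy] at h0; linarith)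
  have c4' : 0 ≤ w2 + w1' * lam' :=
    s19_coeff_nonneg ν w2 w1 (w2 + w1' * lam') (w1 - w1' * lam') hw2 hw1 f2y f1y h02y h01y hstar2y
      (by filter_upwards [hg2yr] with y hy
          have h0 := h0g2y y; rw [hy] at h0; linarith)
  -- pin down the parameters
  rcases s19_final w1 w2 w1' w2' lam lam' hw1 hw2 hw hw1'pos hw2'pos hsum' hmul
      (by linarith) (by linarith) (by linarith) (by linarith)
      (by linarith) (by linarith) (by linarith) (by linarith) with
    ⟨e1, e2, e3, e4⟩ | ⟨e1, e2, e3, e4⟩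
  · left
    refine ⟨e1, e2, ?_, ?_, ?_, ?_⟩
    · filter_upwards [hg1xr] with x hx
      rw [e2, e3] at hx
      linear_combination hx + f1x x * hw
    · filter_upwards [hg2xr] with x hx
      rw [e1, e3] at hx
      linear_combination hx + f2x x * hw
    · filter_upwards [hg1yr] with y hy
      rw [e2, e4] at hy
      linear_combination hy + f1y y * hw
    · filter_upwards [hg2yr] with y hy
      rw [e1, e4] at hy
      linear_combination hy + f2y y * hw
  · right
    refine ⟨e1, e2, ?_, ?_, ?_, ?_⟩
    · filter_upwards [hg1xr] with x hx
      rw [e2, e3] at hx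
      linear_combination hx + f2x x * hw
    · filter_upwards [hg2xr] with x hx
      rw [e1, e3] at hx
      linear_combination hx + f1x x * hw
    · filter_upwards [hg1yr] with y hy
      rw [e2, e4] at hy
      linear_combination hy + f2y y * hw
    · filter_upwards [hg2yr] with y hy
      rw [e1, e4] at hy
      linear_combination hy + f1y y * hw


end S19Aux


/-- Identifiability criterion for C = 2 (Appendix A.1): multiplying the four
nonnegativity inequalities pairwise constrains w'₁/w'₂ to a sandwich; the lower
and upper bounds both equal w₁/w₂ iff all four essential suprema μ⁽ⁱ⁾_t equal 1;
hence the two-component bivariate CIMM instance is identifiable up to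
permutation iff all four μ⁽ⁱ⁾_t equal 1. -/
theorem statement_19 {Xt Yt : Type*} [MeasurableSpace Xt] [MeasurableSpace Yt]
    (μ : Measure Xt) (ν : Measure Yt) [SigmaFinite μ] [SigmaFinite ν]
    (w1 w2 : ℝ) (hw1 : 0 < w1) (hw2 : 0 < w2) (hw : w1 + w2 = 1)
    (f1x f2x : Xt → ℝ) (f1y f2y : Yt → ℝ)
    (hf1x_meas : Measurable f1x) (hf2x_meas : Measurable f2x)
    (hf1y_meas : Measurable f1y) (hf2y_meas : Measurable f2y)
    (hf1x_nonneg : ∀ x, 0 ≤ f1x x) (hf2x_nonneg : ∀ x, 0 ≤ f2x x)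
    (hf1y_nonneg : ∀ y, 0 ≤ f1y y) (hf2y_nonneg : ∀ y, 0 ≤ f2y y)
    (hf1x_int : Integrable f1x μ) (hf2x_int : Integrable f2x μ)
    (hf1y_int : Integrable f1y ν) (hf2y_int : Integrable f2y ν)
    (hf1x_one : ∫ x, f1x x ∂μ = 1) (hf2x_one : ∫ x, f2x x ∂μ = 1)
    (hf1y_one : ∫ y, f1y y ∂ν = 1) (hf2y_one : ∫ y, f2y y ∂ν = 1)
    (hΔx : ¬ (f1x =ᵐ[μ] f2x)) (hΔy : ¬ (f1y =ᵐ[ν] f2y))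
    -- the four essential suprema, with their bounds wᵢ < μ⁽ⁱ⁾_t ≤ 1
    (μ1x μ2x μ1y μ2y : ℝ)
    (hμ1x : μ1x = essSup (fun x => w1 * f1x x / (w1 * f1x x + w2 * f2x x))
        (μ.withDensity (fun x => ENNReal.ofReal (w1 * f1x x + w2 * f2x x))))
    (hμ2x : μ2x = essSup (fun x => w2 * f2x x / (w1 * f1x x + w2 * f2x x))
        (μ.withDensity (fun x => ENNReal.ofReal (w1 * f1x x + w2 * f2x x))))
    (hμ1y : μ1y = essSup (fun y => w1 * f1y y / (w1 * f1y y + w2 * f2y y))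
        (ν.withDensity (fun y => ENNReal.ofReal (w1 * f1y y + w2 * f2y y))))
    (hμ2y : μ2y = essSup (fun y => w2 * f2y y / (w1 * f1y y + w2 * f2y y))
        (ν.withDensity (fun y => ENNReal.ofReal (w1 * f1y y + w2 * f2y y))))
    (hμ1x_mem : w1 < μ1x ∧ μ1x ≤ 1) (hμ2x_mem : w2 < μ2x ∧ μ2x ≤ 1)
    (hμ1y_mem : w1 < μ1y ∧ μ1y ≤ 1) (hμ2y_mem : w2 < μ2y ∧ μ2y ≤ 1) :
    -- (1) the pairwise products of the nonnegativity inequalities sandwich w'₁/w'₂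
    (∀ γ w1' : ℝ, 0 < γ → 0 < w1' → w1' < 1 →
      ((μ2x - w2) / Real.sqrt (w1 * w2) ≤ (1 / γ) * Real.sqrt (w1' / (1 - w1'))) →
      ((μ1x - w1) / Real.sqrt (w1 * w2) ≤ (1 / γ) * Real.sqrt ((1 - w1') / w1')) →
      ((μ2y - w2) / Real.sqrt (w1 * w2) ≤ γ * Real.sqrt (w1' / (1 - w1'))) →
      ((μ1y - w1) / Real.sqrt (w1 * w2) ≤ γ * Real.sqrt ((1 - w1') / w1')) →
      (μ2x - w2) * (μ2y - w2) / (w1 * w2) ≤ w1' / (1 - w1') ∧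
        w1' / (1 - w1') ≤ w1 * w2 / ((μ1x - w1) * (μ1y - w1))) ∧
    -- (2) the two bounds both equal w₁/w₂ iff all four essential suprema equal 1
    (((μ2x - w2) * (μ2y - w2) / (w1 * w2) = w1 / w2 ∧
        w1 * w2 / ((μ1x - w1) * (μ1y - w1)) = w1 / w2)
      ↔ (μ1x = 1 ∧ μ2x = 1 ∧ μ1y = 1 ∧ μ2y = 1)) ∧
    -- (3) identifiability up to permutation iff all four essential suprema equal 1
    ((∀ (w1' w2' : ℝ) (g1x g2x : Xt → ℝ) (g1y g2y : Yt → ℝ),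
        0 ≤ w1' → 0 ≤ w2' → w1' + w2' = 1 →
        Measurable g1x → Measurable g2x → Measurable g1y → Measurable g2y →
        (∀ x, 0 ≤ g1x x) → (∀ x, 0 ≤ g2x x) →
        (∀ y, 0 ≤ g1y y) → (∀ y, 0 ≤ g2y y) →
        (∫ x, g1x x ∂μ = 1) → (∫ x, g2x x ∂μ = 1) →
        (∫ y, g1y y ∂ν = 1) → (∫ y, g2y y ∂ν = 1) →
        (∀ᵐ p ∂(μ.prod ν),
          w1' * g1x p.1 * g1y p.2 + w2' * g2x p.1 * g2y p.2
            = w1 * f1x p.1 * f1y p.2 + w2 * f2x p.1 * f2y p.2) →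
        ((w1' = w1 ∧ w2' = w2 ∧ g1x =ᵐ[μ] f1x ∧ g2x =ᵐ[μ] f2x ∧
            g1y =ᵐ[ν] f1y ∧ g2y =ᵐ[ν] f2y) ∨
         (w1' = w2 ∧ w2' = w1 ∧ g1x =ᵐ[μ] f2x ∧ g2x =ᵐ[μ] f1x ∧
            g1y =ᵐ[ν] f2y ∧ g2y =ᵐ[ν] f1y)))
      ↔ (μ1x = 1 ∧ μ2x = 1 ∧ μ1y = 1 ∧ μ2y = 1)) := by
  have hsup2x : μ2x = essSup (fun x => w2 * f2x x / (w2 * f2x x + w1 * f1x x))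
      (μ.withDensity (fun x => ENNReal.ofReal (w2 * f2x x + w1 * f1x x))) := by
    have hfun : (fun x => w2 * f2x x / (w2 * f2x x + w1 * f1x x))
        = (fun x => w2 * f2x x / (w1 * f1x x + w2 * f2x x)) := funext fun x => by rw [add_comm]
    have hden : (fun x => ENNReal.ofReal (w2 * f2x x + w1 * f1x x))
        = (fun x => ENNReal.ofReal (w1 * f1x x + w2 * f2x x)) := funext fun x => by rw [add_comm]
    rw [hμ2x, hfun, hden]
  have hsup2y : μ2y = essSup (fun y => w2 * f2y y / (w2 * f2y y + w1 * f1y y))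
      (ν.withDensity (fun y => ENNReal.ofReal (w2 * f2y y + w1 * f1y y))) := by
    have hfun : (fun y => w2 * f2y y / (w2 * f2y y + w1 * f1y y))
        = (fun y => w2 * f2y y / (w1 * f1y y + w2 * f2y y)) := funext fun y => by rw [add_comm]
    have hden : (fun y => ENNReal.ofReal (w2 * f2y y + w1 * f1y y))
        = (fun y => ENNReal.ofReal (w1 * f1y y + w2 * f2y y)) := funext fun y => by rw [add_comm]
    rw [hμ2y, hfun, hden]
  refine ⟨s19_part1 w1 w2 μ1x μ2x μ1y μ2y hw1 hw2 hμ1x_mem.1 hμ2x_mem.1 hμ1y_mem.1 hμ2y_mem.1,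
    s19_part2 w1 w2 μ1x μ2x μ1y μ2y hw1 hw2 hw hμ1x_mem hμ2x_mem hμ1y_mem hμ2y_mem, ?_, ?_⟩
  · -- forward direction of (3)
    intro hLHS
    have case1 : μ1x < 1 → False := by
      intro hlt
      obtain ⟨c, hc, hslack⟩ := s19_slack μ w1 w2 hw1 hw2 f1x f2x hf1x_nonneg hf2x_nonneg
        hf1x_meas hf2x_meas μ1x (by linarith [hμ1x_mem.1]) hlt hμ1x.symm
      obtain ⟨w1', w2', g1x, g2x, g1y, g2y, a1, a2, a3, a4, a5, a6, a7, a8, a9, a10, a11,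
          a12, a13, a14, a15, a16, hne1, hne2⟩ :=
        s19_master μ ν w1 w2 hw1 hw2 hw f1x f2x f1y f2y hf1x_meas hf2x_meas hf1y_meas
          hf2y_meas hf1x_nonneg hf2x_nonneg hf1y_nonneg hf2y_nonneg hf1x_int hf2x_int
          hf1y_int hf2y_int hf1x_one hf2x_one hf1y_one hf2y_one c hc hslack
      rcases hLHS w1' w2' g1x g2x g1y g2y a1 a2 a3 a4 a5 a6 a7 a8 a9 a10 a11 a12 a13 a14 a15
          a16 with ⟨e, _⟩ | ⟨e, _⟩
      · exact hne1 e
      · exact hne2 e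
    have case2 : μ2x < 1 → False := by
      intro hlt
      obtain ⟨c, hc, hslack⟩ := s19_slack μ w2 w1 hw2 hw1 f2x f1x hf2x_nonneg hf1x_nonneg
        hf2x_meas hf1x_meas μ2x (by linarith [hμ2x_mem.1]) hlt hsup2x.symm
      obtain ⟨w1', w2', g1x, g2x, g1y, g2y, a1, a2, a3, a4, a5, a6, a7, a8, a9, a10, a11,
          a12, a13, a14, a15, a16, hne1, hne2⟩ :=
        s19_master μ ν w2 w1 hw2 hw1 (by linarith) f2x f1x f2y f1y hf2x_meas hf1x_meas
          hf2y_meas hf1y_meas hf2x_nonneg hf1x_nonneg hf2y_nonneg hf1y_nonneg hf2x_int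
          hf1x_int hf2y_int hf1y_int hf2x_one hf1x_one hf2y_one hf1y_one c hc hslack
      have a16' : ∀ᵐ p ∂(μ.prod ν),
          w1' * g1x p.1 * g1y p.2 + w2' * g2x p.1 * g2y p.2
            = w1 * f1x p.1 * f1y p.2 + w2 * f2x p.1 * f2y p.2 := by
        filter_upwards [a16] with p hp; linarith
      rcases hLHS w1' w2' g1x g2x g1y g2y a1 a2 a3 a4 a5 a6 a7 a8 a9 a10 a11 a12 a13 a14 a15
          a16' with ⟨e, _⟩ | ⟨e, _⟩
      · exact hne2 e
      · exact hne1 e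
    have case3 : μ1y < 1 → False := by
      intro hlt
      obtain ⟨c, hc, hslack⟩ := s19_slack ν w1 w2 hw1 hw2 f1y f2y hf1y_nonneg hf2y_nonneg
        hf1y_meas hf2y_meas μ1y (by linarith [hμ1y_mem.1]) hlt hμ1y.symm
      obtain ⟨w1', w2', g1y, g2y, g1x, g2x, a1, a2, a3, a4, a5, a6, a7, a8, a9, a10, a11,
          a12, a13, a14, a15, a16, hne1, hne2⟩ :=
        s19_master ν μ w1 w2 hw1 hw2 hw f1y f2y f1x f2x hf1y_meas hf2y_meas hf1x_meas
          hf2x_meas hf1y_nonneg hf2y_nonneg hf1x_nonneg hf2x_nonneg hf1y_int hf2y_int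
          hf1x_int hf2x_int hf1y_one hf2y_one hf1x_one hf2x_one c hc hslack
      have a16s := s19_ae_swap (μ := μ) (ν := ν) a16
      have a16' : ∀ᵐ p ∂(μ.prod ν),
          w1' * g1x p.1 * g1y p.2 + w2' * g2x p.1 * g2y p.2
            = w1 * f1x p.1 * f1y p.2 + w2 * f2x p.1 * f2y p.2 := by
        filter_upwards [a16s] with p hp
        simp only [Prod.fst_swap, Prod.snd_swap] at hp
        linarith
      rcases hLHS w1' w2' g1x g2x g1y g2y a1 a2 a3 a6 a7 a4 a5 a10 a11 a8 a9 a14 a15 a12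
          a13 a16' with ⟨e, _⟩ | ⟨e, _⟩
      · exact hne1 e
      · exact hne2 e
    have case4 : μ2y < 1 → False := by
      intro hlt
      obtain ⟨c, hc, hslack⟩ := s19_slack ν w2 w1 hw2 hw1 f2y f1y hf2y_nonneg hf1y_nonneg
        hf2y_meas hf1y_meas μ2y (by linarith [hμ2y_mem.1]) hlt hsup2y.symm
      obtain ⟨w1', w2', g1y, g2y, g1x, g2x, a1, a2, a3, a4, a5, a6, a7, a8, a9, a10, a11,
          a12, a13, a14, a15, a16, hne1, hne2⟩ :=
        s19_master ν μ w2 w1 hw2 hw1 (by linarith) f2y f1y f2x f1x hf2y_meas hf1y_meas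
          hf2x_meas hf1x_meas hf2y_nonneg hf1y_nonneg hf2x_nonneg hf1x_nonneg hf2y_int
          hf1y_int hf2x_int hf1x_int hf2y_one hf1y_one hf2x_one hf1x_one c hc hslack
      have a16s := s19_ae_swap (μ := μ) (ν := ν) a16
      have a16' : ∀ᵐ p ∂(μ.prod ν),
          w1' * g1x p.1 * g1y p.2 + w2' * g2x p.1 * g2y p.2
            = w1 * f1x p.1 * f1y p.2 + w2 * f2x p.1 * f2y p.2 := by
        filter_upwards [a16s] with p hp
        simp only [Prod.fst_swap, Prod.snd_swap] at hp
        linarith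
      rcases hLHS w1' w2' g1x g2x g1y g2y a1 a2 a3 a6 a7 a4 a5 a10 a11 a8 a9 a14 a15 a12
          a13 a16' with ⟨e, _⟩ | ⟨e, _⟩
      · exact hne2 e
      · exact hne1 e
    have e1 : μ1x = 1 := by
      rcases lt_or_eq_of_le hμ1x_mem.2 with h | h
      · exact (case1 h).elim
      · exact h
    have e2 : μ2x = 1 := by
      rcases lt_or_eq_of_le hμ2x_mem.2 with h | h
      · exact (case2 h).elim
      · exact h
    have e3 : μ1y = 1 := by
      rcases lt_or_eq_of_le hμ1y_mem.2 with h | h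
      · exact (case3 h).elim
      · exact h
    have e4 : μ2y = 1 := by
      rcases lt_or_eq_of_le hμ2y_mem.2 with h | h
      · exact (case4 h).elim
      · exact h
    exact ⟨e1, e2, e3, e4⟩
  · -- backward direction of (3)
    rintro ⟨e1x, e2x, e1y, e2y⟩
    intro w1' w2' g1x g2x g1y g2y hw1'0 hw2'0 hsum' hmg1x hmg2x hmg1y hmg2y h0g1x h0g2x
      h0g1y h0g2y hog1x hog2x hog1y hog2y hE
    exact s19_backward μ ν w1 w2 hw1 hw2 hw f1x f2x f1y f2y hf1x_meas hf2x_meas hf1y_meas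
      hf2y_meas hf1x_nonneg hf2x_nonneg hf1y_nonneg hf2y_nonneg hf1x_int hf2x_int hf1y_int
      hf2y_int hf1x_one hf2x_one hf1y_one hf2y_one hΔx hΔy
      (s19_star μ w1 w2 hw1 hw2 f1x f2x hf1x_nonneg hf2x_nonneg hf1x_meas hf2x_meas
        hf1x_int hf2x_int hf1x_one hf2x_one (hμ1x.symm.trans e1x))
      (s19_star μ w2 w1 hw2 hw1 f2x f1x hf2x_nonneg hf1x_nonneg hf2x_meas hf1x_meas
        hf2x_int hf1x_int hf2x_one hf1x_one (hsup2x.symm.trans e2x))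
      (s19_star ν w1 w2 hw1 hw2 f1y f2y hf1y_nonneg hf2y_nonneg hf1y_meas hf2y_meas
        hf1y_int hf2y_int hf1y_one hf2y_one (hμ1y.symm.trans e1y))
      (s19_star ν w2 w1 hw2 hw1 f2y f1y hf2y_nonneg hf1y_nonneg hf2y_meas hf1y_meas
        hf2y_int hf1y_int hf2y_one hf1y_one (hsup2y.symm.trans e2y))
      w1' w2' g1x g2x g1y g2y hw1'0 hw2'0 hsum' hmg1x hmg2x hmg1y hmg2y h0g1x h0g2x
      h0g1y h0g2y hog1x hog2x hog1y hog2y hE
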